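/- Let a < b be reals, k > 0, z any real number, n ≥ 1, h = (b−a)/(2n), θ = k·h, and nodes x_r = a + r·h for r = 0,…,2n. Let ψ : ℝ → ℝ be a polynomial of degree at most 2. Then ∫_a^b sin(k·x + z)·ψ(x) dx = h·[ α·(ψ(a)·cos(k·a + z) − ψ(b)·cos(k·b + z)) + β·S_even(z) + γ·S_odd(z) ], where S_even(z) = Σ_{r=0}^{n} ψ(x_{2r})·sin(k·x_{2r} + z) − (1/2)·(ψ(a)·sin(k·a + z) + ψ(b)·sin(k·b + z)) and S_odd(z) = Σ_{r=1}^{n} ψ(x_{2r−1})·sin(k·x_{2r−1} + z): the phase-shifted Filon formula is exact for quadratic polynomials for every phase z. -/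

import Mathlib

open Real Finset

lemma filon_panel (k z c0 c1 c2 m h u v α β γ : ℝ) (hk : k ≠ 0) (hh : h ≠ 0)
    (hu : u = m - h) (hv : v = m + h)
    (hα : α = 1 / (k*h) + Real.sin (k*h) * Real.cos (k*h) / (k*h) ^ 2 - 2 * Real.sin (k*h) ^ 2 / (k*h) ^ 3)
    (hβ : β = 2 * ((1 + Real.cos (k*h) ^ 2) / (k*h) ^ 2 - 2 * Real.sin (k*h) * Real.cos (k*h) / (k*h) ^ 3))
    (hγ : γ = 4 * (Real.sin (k*h) / (k*h) ^ 3 - Real.cos (k*h) / (k*h) ^ 2)) :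
    (∫ s in u..v, Real.sin (k * s + z) * (c2 * s ^ 2 + c1 * s + c0)) =
      h * (α * ((c2*u^2+c1*u+c0) * Real.cos (k*u+z) - (c2*v^2+c1*v+c0) * Real.cos (k*v+z))
        + β * (((c2*u^2+c1*u+c0) * Real.sin (k*u+z) + (c2*v^2+c1*v+c0) * Real.sin (k*v+z)) / 2)
        + γ * ((c2*m^2+c1*m+c0) * Real.sin (k*m+z))) := by
  subst hu hv hα hβ hγ
  have hkh : k * h ≠ 0 := mul_ne_zero hk hh
  have hF : ∀ t : ℝ, HasDerivAt (fun t : ℝ =>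
      (-(c2*t^2+c1*t+c0) * Real.cos (k*t+z) * k^2 + (2*c2*t+c1) * Real.sin (k*t+z) * k
        + 2*c2*Real.cos (k*t+z)) / k^3)
      (Real.sin (k*t+z) * (c2*t^2+c1*t+c0)) t := by
    intro t
    have hlin : HasDerivAt (fun t : ℝ => k*t+z) k t := by
      simpa using ((hasDerivAt_id t).const_mul k).add_const z
    have hcos : HasDerivAt (fun t : ℝ => Real.cos (k*t+z)) (-Real.sin (k*t+z) * k) t :=
      by have := (Real.hasDerivAt_cos (k*t+z)).comp t hlin; exact this
    have hsin : HasDerivAt (fun t : ℝ => Real.sin (k*t+z)) (Real.cos (k*t+z) * k) t :=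
      by have := (Real.hasDerivAt_sin (k*t+z)).comp t hlin; exact this
    have hpoly : HasDerivAt (fun t : ℝ => -(c2*t^2+c1*t+c0)) (-(2*c2*t+c1)) t := by
      have : HasDerivAt (fun t : ℝ => c2*t^2+c1*t+c0) (2*c2*t+c1) t := by
        have h2 : HasDerivAt (fun t : ℝ => t^2) (2*t) t := by simpa using hasDerivAt_pow 2 t
        simpa [mul_comm, mul_assoc, mul_left_comm] using
          (((h2.const_mul c2).add ((hasDerivAt_id t).const_mul c1)).add_const c0)
      exact this.neg
    have hpoly2 : HasDerivAt (fun t : ℝ => 2*c2*t+c1) (2*c2) t := by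
      simpa using ((hasDerivAt_id t).const_mul (2*c2)).add_const c1
    have h1 := (hpoly.mul hcos).mul_const (k^2)
    have h2 := (hpoly2.mul hsin).mul_const k
    have h3 := hcos.const_mul (2*c2)
    have htot := ((h1.add h2).add h3).div_const (k^3)
    refine htot.congr_deriv ?_
    rw [div_eq_iff (pow_ne_zero 3 hk)]
    ring
  have hcont : Continuous fun s : ℝ => Real.sin (k * s + z) * (c2 * s ^ 2 + c1 * s + c0) := by
    fun_prop
  rw [intervalIntegral.integral_eq_sub_of_hasDerivAt (fun t _ => hF t)
    (hcont.intervalIntegrable _ _)]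
  rw [div_sub_div_same]
  rw [show
      h * ((1 / (k*h) + Real.sin (k*h) * Real.cos (k*h) / (k*h) ^ 2 - 2 * Real.sin (k*h) ^ 2 / (k*h) ^ 3)
            * ((c2*(m-h)^2+c1*(m-h)+c0) * Real.cos (k*(m-h)+z) - (c2*(m+h)^2+c1*(m+h)+c0) * Real.cos (k*(m+h)+z))
        + (2 * ((1 + Real.cos (k*h) ^ 2) / (k*h) ^ 2 - 2 * Real.sin (k*h) * Real.cos (k*h) / (k*h) ^ 3))
            * (((c2*(m-h)^2+c1*(m-h)+c0) * Real.sin (k*(m-h)+z) + (c2*(m+h)^2+c1*(m+h)+c0) * Real.sin (k*(m+h)+z)) / 2)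
        + (4 * (Real.sin (k*h) / (k*h) ^ 3 - Real.cos (k*h) / (k*h) ^ 2))
            * ((c2*m^2+c1*m+c0) * Real.sin (k*m+z))) =
      (h * (((k*h)^2 + (k*h)*(Real.sin (k*h)*Real.cos (k*h)) - 2*Real.sin (k*h)^2)
            * ((c2*(m-h)^2+c1*(m-h)+c0) * Real.cos (k*(m-h)+z) - (c2*(m+h)^2+c1*(m+h)+c0) * Real.cos (k*(m+h)+z))
        + (2*((k*h)*(1+Real.cos (k*h)^2) - 2*Real.sin (k*h)*Real.cos (k*h)))
            * (((c2*(m-h)^2+c1*(m-h)+c0) * Real.sin (k*(m-h)+z) + (c2*(m+h)^2+c1*(m+h)+c0) * Real.sin (k*(m+h)+z)) / 2)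
        + (4*(Real.sin (k*h) - (k*h)*Real.cos (k*h)))
            * ((c2*m^2+c1*m+c0) * Real.sin (k*m+z)))) / (k*h)^3
      from by field_simp]
  rw [div_eq_div_iff (pow_ne_zero 3 hk) (pow_ne_zero 3 hkh)]
  rw [show k*(m+h)+z = (k*m+z)+k*h from by ring, show k*(m-h)+z = (k*m+z)-(k*h) from by ring,
    Real.cos_add (k*m+z) (k*h), Real.sin_add (k*m+z) (k*h), Real.cos_sub (k*m+z) (k*h), Real.sin_sub (k*m+z) (k*h)]
  linear_combination (2 * Real.sin (k*m+z) * k^3 * h * (2*Real.sin (k*h) - k*h*Real.cos (k*h))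
    * (c0 + c1*m + c2*m^2 + c2*h^2)) * Real.sin_sq_add_cos_sq (k*h)

open Real Finset

lemma filon_sum_algebra (n : ℕ) (h α β γ : ℝ) (g q w : ℕ → ℝ) :
    ∑ i ∈ Finset.range n, h * (α * (g i - g (i+1)) + β * ((q i + q (i+1))/2) + γ * w i)
    = h * (α * (g 0 - g n) + β * ((∑ i ∈ Finset.range (n+1), q i) - (q 0 + q n)/2)
        + γ * ∑ i ∈ Finset.range n, w i) := by
  induction n with
  | zero => simp
  | succ n ih =>
      rw [Finset.sum_range_succ, ih, Finset.sum_range_succ (f := q) (n := n+1),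
        Finset.sum_range_succ (f := w) (n := n)]
      ring

open Real Finset

theorem filon_phase_shifted_exact_on_quadratics
    (a b k z : ℝ) (hab : a < b) (hk : 0 < k) (n : ℕ) (hn : 1 ≤ n)
    (h : ℝ) (hh : h = (b - a) / (2 * n)) (θ : ℝ) (hθ : θ = k * h)
    (x : ℕ → ℝ) (hx : ∀ r : ℕ, x r = a + r * h)
    (α β γ : ℝ)
    (hα : α = 1 / θ + Real.sin θ * Real.cos θ / θ ^ 2 - 2 * Real.sin θ ^ 2 / θ ^ 3)
    (hβ : β = 2 * ((1 + Real.cos θ ^ 2) / θ ^ 2 - 2 * Real.sin θ * Real.cos θ / θ ^ 3))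
    (hγ : γ = 4 * (Real.sin θ / θ ^ 3 - Real.cos θ / θ ^ 2))
    (ψ : ℝ → ℝ) (hψ : ∃ c0 c1 c2 : ℝ, ∀ s : ℝ, ψ s = c2 * s ^ 2 + c1 * s + c0) :
    (∫ s in a..b, Real.sin (k * s + z) * ψ s) =
      h * (α * (ψ a * Real.cos (k * a + z) - ψ b * Real.cos (k * b + z))
        + β * ((∑ r ∈ Finset.range (n + 1), ψ (x (2 * r)) * Real.sin (k * x (2 * r) + z))
            - (ψ a * Real.sin (k * a + z) + ψ b * Real.sin (k * b + z)) / 2)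
        + γ * ∑ r ∈ Finset.range n, ψ (x (2 * r + 1)) * Real.sin (k * x (2 * r + 1) + z)) := by
  obtain ⟨c0, c1, c2, hP⟩ := hψ
  subst hθ
  have hnpos : (0:ℝ) < n := by exact_mod_cast Nat.lt_of_lt_of_le Nat.zero_lt_one hn
  have hhpos : 0 < h := by rw [hh]; exact div_pos (by linarith) (by positivity)
  have hhne : h ≠ 0 := ne_of_gt hhpos
  have hkne : k ≠ 0 := ne_of_gt hk
  have hx0 : x 0 = a := by rw [hx]; norm_num
  have hxb : x (2*n) = b := by
    rw [hx, hh]; push_cast; field_simp; ring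
  have hcont : Continuous fun s : ℝ => Real.sin (k * s + z) * ψ s := by
    have he : (fun s : ℝ => Real.sin (k * s + z) * ψ s)
        = fun s : ℝ => Real.sin (k * s + z) * (c2 * s ^ 2 + c1 * s + c0) :=
      funext fun s => by rw [hP]
    rw [he]; fun_prop
  have hsplit : ∑ i ∈ Finset.range n,
      (∫ s in x (2*i)..x (2*(i+1)), Real.sin (k * s + z) * ψ s)
      = ∫ s in (x 0)..(x (2*n)), Real.sin (k * s + z) * ψ s :=
    intervalIntegral.sum_integral_adjacent_intervals
      (fun i _ => hcont.intervalIntegrable _ _)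
  have hpanel : ∀ i : ℕ,
      (∫ s in x (2*i)..x (2*(i+1)), Real.sin (k * s + z) * ψ s)
      = h * (α * (ψ (x (2*i)) * Real.cos (k * x (2*i) + z)
              - ψ (x (2*(i+1))) * Real.cos (k * x (2*(i+1)) + z))
          + β * ((ψ (x (2*i)) * Real.sin (k * x (2*i) + z)
              + ψ (x (2*(i+1))) * Real.sin (k * x (2*(i+1)) + z)) / 2)
          + γ * (ψ (x (2*i+1)) * Real.sin (k * x (2*i+1) + z))) := by
    intro i
    have hm : x (2*i) = x (2*i+1) - h := by rw [hx, hx]; push_cast; ring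
    have hv : x (2*(i+1)) = x (2*i+1) + h := by rw [hx, hx]; push_cast; ring
    simp only [hP]
    exact filon_panel k z c0 c1 c2 (x (2*i+1)) h (x (2*i)) (x (2*(i+1))) α β γ
      hkne hhne hm hv hα hβ hγ
  rw [← hx0, ← hxb, ← hsplit]
  calc ∑ i ∈ Finset.range n, (∫ s in x (2*i)..x (2*(i+1)), Real.sin (k * s + z) * ψ s)
      = ∑ i ∈ Finset.range n,
          h * (α * ((fun j => ψ (x (2*j)) * Real.cos (k * x (2*j) + z)) i
                  - (fun j => ψ (x (2*j)) * Real.cos (k * x (2*j) + z)) (i+1))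
            + β * (((fun j => ψ (x (2*j)) * Real.sin (k * x (2*j) + z)) i
                  + (fun j => ψ (x (2*j)) * Real.sin (k * x (2*j) + z)) (i+1)) / 2)
            + γ * (fun j => ψ (x (2*j+1)) * Real.sin (k * x (2*j+1) + z)) i) :=
        Finset.sum_congr rfl fun i _ => hpanel i
    _ = _ := by
        rw [filon_sum_algebra]
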